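/- Let u, v be nonzero reals and let a : ℕ → ℝ be any sequence. Define A(n,k) by A(n,0) = a(n) and A(n,k) = u·A(n,k-1) + v·A(n-1,k-1) for 1 ≤ k ≤ n, and let b(n) = A(n,n). Then for all n, a(n) = Σ_{i=0}^{n} C(n,i) (1/u)^i (-v/u)^{n-i} b(i). -/

import Mathlib

open Finset

theorem stmt_1 (u v : ℝ) (hu : u ≠ 0) (hv : v ≠ 0)
    (a : ℕ → ℝ) (A : ℕ → ℕ → ℝ) (hA0 : ∀ n, A n 0 = a n)
    (hA : ∀ n k, 1 ≤ k → k ≤ n → A n k = u * A n (k-1) + v * A (n-1) (k-1))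
    (b : ℕ → ℝ) (hb : ∀ n, b n = A n n) :
    ∀ n, a n = ∑ i ∈ Finset.range (n+1),
      (n.choose i : ℝ) * (1/u)^i * (-v/u)^(n-i) * b i := by
  -- forward formula
  have key : ∀ k n, k ≤ n → A n k = ∑ j ∈ range (k+1),
      (k.choose j : ℝ) * u^j * v^(k-j) * a (n-k+j) := by
    intro k
    induction k with
    | zero => intro n _; simp [hA0]
    | succ k ih =>
      intro n hkn
      rw [hA n (k+1) (by omega) hkn]
      simp only [Nat.add_sub_cancel]
      rw [ih n (by omega), ih (n-1) (by omega)]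
      rw [Finset.mul_sum, Finset.mul_sum]
      -- RHS: split Pascal
      have : ∀ j ∈ range (k+1+1), ((k+1).choose j : ℝ) * u^j * v^(k+1-j) * a (n-(k+1)+j)
          = (if j = 0 then 0 else (k.choose (j-1) : ℝ) * u^j * v^(k+1-j) * a (n-(k+1)+j))
            + (k.choose j : ℝ) * u^j * v^(k+1-j) * a (n-(k+1)+j) := by
        intro j hj
        rcases Nat.eq_zero_or_pos j with h0 | h0
        · subst h0; simp
        · obtain ⟨j', rfl⟩ : ∃ j', j = j' + 1 := ⟨j - 1, by omega⟩
          rw [Nat.choose_succ_succ, if_neg (Nat.succ_ne_zero j')]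
          push_cast
          ring
      rw [Finset.sum_congr rfl this, Finset.sum_add_distrib]
      congr 1
      · -- matches u * sum over A n
        conv_rhs => rw [Finset.sum_range_succ']
        simp only [if_true, add_zero]
        apply Finset.sum_congr rfl
        intro j hj
        simp only [mem_range] at hj
        simp only [if_neg (Nat.succ_ne_zero j), Nat.add_sub_cancel]
        have h1 : n - (k+1) + (j+1) = n - k + j := by omega
        have h2 : k + 1 - (j + 1) = k - j := by omega
        rw [h1, h2, pow_succ]
        ring
      · -- matches v * sum over A(n-1)
        conv_rhs => rw [Finset.sum_range_succ, Nat.choose_succ_self]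
        simp only [Nat.cast_zero, zero_mul, mul_zero, zero_mul, add_zero]
        apply Finset.sum_congr rfl
        intro j hj
        simp only [mem_range] at hj
        have h1 : n - 1 - k + j = n - (k+1) + j := by omega
        have h2 : k + 1 - j = (k - j) + 1 := by omega
        rw [h1, h2, pow_succ]
        ring
  have hbf : ∀ n, b n = ∑ j ∈ range (n+1), (n.choose j : ℝ) * u^j * v^(n-j) * a j := by
    intro n
    rw [hb, key n n le_rfl]
    apply Finset.sum_congr rfl
    intro j hj
    congr 2
    omega
  intro n
  -- substitute and swap sums
  have step1 : ∀ i ∈ range (n+1), (n.choose i : ℝ) * (1/u)^i * (-v/u)^(n-i) * b i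
      = ∑ j ∈ range (i+1), (n.choose i : ℝ) * (1/u)^i * (-v/u)^(n-i) *
          ((i.choose j : ℝ) * u^j * v^(i-j) * a j) := by
    intro i _
    rw [hbf i, Finset.mul_sum]
  rw [Finset.sum_congr rfl step1]
  have swap : ∑ i ∈ range (n+1), ∑ j ∈ range (i+1),
        (n.choose i : ℝ) * (1/u)^i * (-v/u)^(n-i) * ((i.choose j : ℝ) * u^j * v^(i-j) * a j)
      = ∑ j ∈ range (n+1), ∑ i ∈ Finset.Ico j (n+1),
        (n.choose i : ℝ) * (1/u)^i * (-v/u)^(n-i) * ((i.choose j : ℝ) * u^j * v^(i-j) * a j) := by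
    simp only [← Nat.Ico_zero_eq_range]
    rw [← Finset.sum_Ico_Ico_comm]
  rw [swap]
  -- inner sums vanish except j = n
  have inner : ∀ j ≤ n, ∑ i ∈ Finset.Ico j (n+1),
        (n.choose i : ℝ) * (1/u)^i * (-v/u)^(n-i) * ((i.choose j : ℝ) * u^j * v^(i-j) * a j)
      = (if j = n then a n else 0) := by
    intro j hj
    rw [Finset.sum_Ico_eq_sum_range]
    have hnj : n + 1 - j = (n - j) + 1 := by omega
    rw [hnj]
    have hterm : ∀ m ∈ range (n - j + 1),
        ((n.choose (j+m) : ℝ) * (1/u)^(j+m) * (-v/u)^(n-(j+m)) *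
          (((j+m).choose j : ℝ) * u^j * v^((j+m)-j) * a j))
        = ((n-j).choose m : ℝ) * (v/u)^m * (-(v/u))^(n-j-m) * ((n.choose j : ℝ) * a j) := by
      intro m hm
      simp only [mem_range] at hm
      have hc : (n.choose (j+m) : ℝ) * ((j+m).choose j : ℝ)
          = (n.choose j : ℝ) * ((n-j).choose m : ℝ) := by
        rw [← Nat.cast_mul, ← Nat.cast_mul, Nat.choose_mul (by omega)]
        congr 3 <;> omega
      have h1 : n - (j+m) = n - j - m := by omega
      have h2 : j + m - j = m := by omega
      rw [h1, h2]
      have e : ((n.choose (j+m) : ℝ)) * (1/u)^(j+m) * (-v/u)^(n-j-m) *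
          (((j+m).choose j : ℝ) * u^j * v^m * a j)
          = ((n.choose (j+m) : ℝ) * ((j+m).choose j : ℝ)) *
            ((1/u)^(j+m) * (-v/u)^(n-j-m) * u^j * v^m * a j) := by ring
      rw [e, hc]
      have hpow : (1/u)^(j+m) * (-v/u)^(n-j-m) * u^j * v^m
          = (v/u)^m * (-(v/u))^(n-j-m) := by
        rw [pow_add]
        have : (-v/u) = -(v/u) := by ring
        rw [this]
        field_simp
        have hu' : (1/u)^j * u^j = 1 := by rw [← mul_pow, one_div, inv_mul_cancel₀ hu, one_pow]
        linear_combination ((1/u)^m * (-(v/u))^(n-j-m) * v^m) * hu'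
      calc (n.choose j : ℝ) * ((n-j).choose m : ℝ) *
            ((1/u)^(j+m) * (-v/u)^(n-j-m) * u^j * v^m * a j)
          = ((n-j).choose m : ℝ) * ((1/u)^(j+m) * (-v/u)^(n-j-m) * u^j * v^m) *
            ((n.choose j : ℝ) * a j) := by ring
        _ = _ := by rw [hpow]; ring
    rw [Finset.sum_congr rfl hterm, ← Finset.sum_mul]
    have hb2 : ∑ m ∈ range (n-j+1), ((n-j).choose m : ℝ) * (v/u)^m * (-(v/u))^(n-j-m)
        = ((v/u) + (-(v/u)))^(n-j) := by
      rw [add_pow]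
      apply Finset.sum_congr rfl
      intro m _
      ring
    rw [hb2]
    simp only [add_neg_cancel]
    rcases eq_or_ne j n with h | h
    · subst h
      simp
    · rw [if_neg h, zero_pow (by omega)]
      ring
  rw [Finset.sum_congr rfl (fun j hj => inner j (by simpa [Nat.lt_succ_iff] using hj))]
  simp
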